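/- arXiv:1804.02874 — 4 statements merged into one kernel-verified Lean document; each statement's English description precedes it below -/
import Mathlib

section
/- Let G be a compact Hausdorff topological group and φ : G → G a continuous endomorphism. If the number of Reidemeister classes of φ is finite, then each Reidemeister class is both closed and open in G. -/
/-- The Reidemeister (twisted conjugacy) class of `g` for an endomorphism `φ`. -/
def ReidClass {G : Type*} [Group G] (φ : G →* G) (g : G) : Set G :=
  {h | ∃ x : G, h = x * g * (φ x)⁻¹}

lemma reidClass_mem_self {G : Type*} [Group G] (φ : G →* G) (g : G) :
    g ∈ ReidClass φ g := ⟨1, by simp⟩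

lemma reidClass_eq_of_mem {G : Type*} [Group G] (φ : G →* G) {g h : G}
    (hh : h ∈ ReidClass φ g) : ReidClass φ h = ReidClass φ g := by
  obtain ⟨x, rfl⟩ := hh
  ext y
  constructor
  · rintro ⟨z, rfl⟩
    exact ⟨z * x, by simp [mul_assoc]⟩
  · rintro ⟨z, rfl⟩
    refine ⟨z * x⁻¹, ?_⟩
    simp [mul_assoc]

theorem reidClass_isClopen_of_finite
    {G : Type*} [Group G] [TopologicalSpace G] [IsTopologicalGroup G]
    [CompactSpace G] [T2Space G]
    (φ : G →* G) (hφ : Continuous φ)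
    (hfin : (Set.range (ReidClass φ)).Finite) :
    ∀ g : G, IsClopen (ReidClass φ g) := by
  have hclosed : ∀ g : G, IsClosed (ReidClass φ g) := by
    intro g
    have himg : ReidClass φ g = (fun x => x * g * (φ x)⁻¹) '' Set.univ := by
      ext h
      simp [ReidClass, eq_comm]
    rw [himg]
    exact (isCompact_univ.image (by continuity)).isClosed
  intro g
  refine ⟨hclosed g, ?_⟩
  have hcompl : (ReidClass φ g)ᶜ =
      ⋃ S ∈ {S ∈ Set.range (ReidClass φ) | S ≠ ReidClass φ g}, S := by
    ext x
    simp only [Set.mem_compl_iff, Set.mem_iUnion, Set.mem_setOf_eq, exists_prop]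
    constructor
    · intro hx
      exact ⟨ReidClass φ x, ⟨⟨x, rfl⟩, fun he => hx (he ▸ reidClass_mem_self φ x)⟩,
        reidClass_mem_self φ x⟩
    · rintro ⟨S, ⟨⟨y, rfl⟩, hne⟩, hxS⟩ hx
      exact hne (by rw [← reidClass_eq_of_mem φ hxS, reidClass_eq_of_mem φ hx])
  rw [← isClosed_compl_iff, hcompl]
  exact Set.Finite.isClosed_biUnion (hfin.subset (Set.sep_subset _ _))
    (by rintro S ⟨⟨y, rfl⟩, -⟩; exact hclosed y)
end

section
/- Let F be a finite group, φ : F → F an endomorphism, and B the linear operator f ↦ f ∘ φ on the space of complex class functions on F. Then the Reidemeister zeta function R_φ(z) = exp(∑_{n≥1} R(φⁿ) zⁿ/n) equals 1/det(1 − Bz); in particular it is rational. -/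
/-- The space of complex class functions on a group `F`. -/
noncomputable def classFunctions (F : Type*) [Group F] : Submodule ℂ (F → ℂ) where
  carrier := {f | ∀ g x : F, f (x * g * x⁻¹) = f g}
  add_mem' := by
    intro f₁ f₂ h₁ h₂ g x
    simp only [Pi.add_apply, h₁ g x, h₂ g x]
  zero_mem' := by intro g x; rfl
  smul_mem' := by
    intro c f hf g x
    simp only [Pi.smul_apply, hf g x]

/-- The operator `f ↦ f ∘ φ` on class functions, induced by an endomorphism `φ`. -/
noncomputable def classFunMap {F : Type*} [Group F] (φ : F →* F) :
    classFunctions F →ₗ[ℂ] classFunctions F where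
  toFun f := ⟨fun g => f.1 (φ g), by
    intro g x
    have := f.2 (φ g) (φ x)
    simpa [map_mul, map_inv] using this⟩
  map_add' := by intros; rfl
  map_smul' := by intros; rfl

/-- The number of twisted conjugacy classes of `ψ : F → F`. -/
noncomputable def reidNum {F : Type*} [Group F] (ψ : F → F) : ℕ :=
  Nat.card (Set.range fun g : F => {h : F | ∃ x : F, h = x * g * (ψ x)⁻¹})

open Complex Function

namespace ReidZeta

universe u v
variable {S : Type u} {T : Type v}

/-- fixed point count of the n-th iterate -/
noncomputable def fixc (σ : S → S) (n : ℕ) : ℕ := Nat.card {x : S // σ^[n] x = x}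

open scoped Classical in
/-- the 0-1 matrix of a self-map -/
noncomputable def mapMat [Fintype S] (σ : S → S) : Matrix S S ℂ :=
  Matrix.of fun i j => if σ i = j then (1 : ℂ) else 0


/-- the term of the zeta series -/
noncomputable def zterm (σ : S → S) (z : ℂ) (n : ℕ) : ℂ :=
  (fixc σ (n+1) : ℂ) * z^(n+1) / (n+1)

lemma fixc_le [Fintype S] (σ : S → S) (n : ℕ) : fixc σ n ≤ Fintype.card S := by
  have : fixc σ n ≤ Nat.card S :=
    Nat.card_le_card_of_injective (Subtype.val : {x : S // σ^[n] x = x} → S)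
      Subtype.val_injective
  rwa [Nat.card_eq_fintype_card] at this

lemma summable_aux {z : ℂ} (hz : ‖z‖ < 1) (c : ℝ) :
    Summable (fun n : ℕ => c * ‖z‖^(n+1)) := by
  have := (summable_geometric_of_lt_one (norm_nonneg z) hz).mul_left (c * ‖z‖)
  refine this.congr fun n => ?_
  rw [pow_succ]; ring

lemma summable_zterm [Fintype S] (σ : S → S) {z : ℂ} (hz : ‖z‖ < 1) :
    Summable (zterm σ z) := by
  refine Summable.of_norm_bounded (summable_aux hz (Fintype.card S : ℝ)) fun n => ?_
  rw [zterm, norm_div, norm_mul, norm_pow]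
  have h1 : ‖((fixc σ (n+1) : ℕ) : ℂ)‖ = ((fixc σ (n+1) : ℕ) : ℝ) := Complex.norm_natCast _
  have h2 : ‖((n : ℂ) + 1)‖ = ((n : ℝ) + 1) := by
    have : ((n : ℂ) + 1) = (((n + 1 : ℕ)) : ℂ) := by push_cast; ring
    rw [this, Complex.norm_natCast]; push_cast; ring
  rw [h1, h2]
  have hd : ((fixc σ (n+1) : ℕ) : ℝ) * ‖z‖^(n+1) / ((n : ℝ) + 1)
      ≤ ((fixc σ (n+1) : ℕ) : ℝ) * ‖z‖^(n+1) :=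
    div_le_self (by positivity) (by linarith [Nat.cast_nonneg (α := ℝ) n])
  refine hd.trans (mul_le_mul_of_nonneg_right ?_ (by positivity))
  exact_mod_cast fixc_le σ (n+1)

lemma iter_semiconj {σ : S → S} {τ : T → T} (e : S → T)
    (h : ∀ x, τ (e x) = e (σ x)) : ∀ (n : ℕ) (x : S), τ^[n] (e x) = e (σ^[n] x) := by
  intro n
  induction n with
  | zero => intro x; simp
  | succ n ih =>
    intro x
    rw [Function.iterate_succ_apply', Function.iterate_succ_apply', ih, h]

lemma fixc_congr {σ : S → S} {τ : T → T} (e : S ≃ T)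
    (h : ∀ x, τ (e x) = e (σ x)) (n : ℕ) : fixc σ n = fixc τ n := by
  apply Nat.card_congr
  refine (Equiv.subtypeEquiv e fun x => ?_)
  rw [iter_semiconj e h n x]
  exact ⟨fun hx => by rw [hx], fun hx => e.injective hx⟩

lemma det_congr [Fintype S] [Fintype T] [DecidableEq S] [DecidableEq T]
    {σ : S → S} {τ : T → T} (e : S ≃ T)
    (h : ∀ x, τ (e x) = e (σ x)) (z : ℂ) :
    (1 - z • mapMat σ).det = (1 - z • mapMat τ).det := by
  have key : (1 - z • mapMat σ) = (1 - z • mapMat τ).submatrix e e := by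
    ext i j
    simp only [Matrix.sub_apply, Matrix.smul_apply, Matrix.submatrix_apply, smul_eq_mul,
      Matrix.one_apply, mapMat, Matrix.of_apply, h i, EmbeddingLike.apply_eq_iff_eq]
    split_ifs <;> simp
  rw [key, Matrix.det_submatrix_equiv_self]


/-- restriction of a self-map to an invariant subset -/
def restr (σ : S → S) (p : S → Prop) (h : ∀ x, p x → p (σ x)) : {x // p x} → {x // p x} :=
  fun x => ⟨σ x.1, h x.1 x.2⟩

lemma restr_iter (σ : S → S) (p : S → Prop) (h : ∀ x, p x → p (σ x)) (n : ℕ)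
    (x : {x // p x}) : ((restr σ p h)^[n] x).1 = σ^[n] x.1 := by
  induction n generalizing x with
  | zero => simp
  | succ n ih =>
    rw [Function.iterate_succ_apply', Function.iterate_succ_apply']
    exact congrArg σ (ih _)

lemma fixc_restr (σ : S → S) (p : S → Prop) (h : ∀ x, p x → p (σ x)) (n : ℕ) :
    fixc (restr σ p h) n = Nat.card {a : S // σ^[n] a = a ∧ p a} := by
  apply Nat.card_congr
  refine ⟨fun y => ⟨y.1.1, ?_, y.1.2⟩, fun a => ⟨⟨a.1, a.2.2⟩, ?_⟩, ?_, ?_⟩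
  · have := congrArg Subtype.val y.2
    rwa [restr_iter] at this
  · apply Subtype.ext
    rw [restr_iter]
    exact a.2.1
  · intro y; apply Subtype.ext; apply Subtype.ext; rfl
  · intro a; apply Subtype.ext; rfl

lemma card_split [Fintype S] (P p : S → Prop) :
    Nat.card {x : S // P x} =
      Nat.card {x : S // P x ∧ p x} + Nat.card {x : S // P x ∧ ¬ p x} := by
  classical
  rw [Nat.card_eq_fintype_card, Nat.card_eq_fintype_card, Nat.card_eq_fintype_card,
    Fintype.card_subtype, Fintype.card_subtype, Fintype.card_subtype,
    ← Finset.filter_filter, ← Finset.filter_filter]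
  exact (Finset.card_filter_add_card_filter_not (p := p)).symm

lemma fixc_split [Fintype S] (σ : S → S) (p : S → Prop) (h1 : ∀ x, p x → p (σ x))
    (h2 : ∀ x, ¬ p x → ¬ p (σ x)) (n : ℕ) :
    fixc σ n = fixc (restr σ p h1) n + fixc (restr σ (fun x => ¬ p x) h2) n := by
  rw [fixc, fixc_restr, fixc_restr, card_split (fun x => σ^[n] x = x) p]

lemma det_split [Fintype S] [DecidableEq S] (σ : S → S) (p : S → Prop) [DecidablePred p]
    (h2 : ∀ x, ¬ p x → ¬ p (σ x)) (z : ℂ) :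
    (1 - z • mapMat σ).det =
      (Matrix.of fun i j : {x // p x} => (1 - z • mapMat σ) i.1 j.1).det *
        (1 - z • mapMat (restr σ (fun x => ¬ p x) h2)).det := by
  rw [← Matrix.det_submatrix_equiv_self (Equiv.sumCompl p) (1 - z • mapMat σ)]
  have key : (1 - z • mapMat σ).submatrix (Equiv.sumCompl p) (Equiv.sumCompl p) =
      Matrix.fromBlocks (Matrix.of fun i j : {x // p x} => (1 - z • mapMat σ) i.1 j.1)
        (Matrix.of fun (i : {x // p x}) (j : {x // ¬ p x}) => (1 - z • mapMat σ) i.1 j.1)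
        0 (1 - z • mapMat (restr σ (fun x => ¬ p x) h2)) := by
    ext i j
    rcases i with i | i <;> rcases j with j | j <;>
      simp only [Matrix.submatrix_apply, Equiv.sumCompl_apply_inl, Equiv.sumCompl_apply_inr,
        Matrix.fromBlocks_apply₁₁, Matrix.fromBlocks_apply₁₂, Matrix.fromBlocks_apply₂₁,
        Matrix.fromBlocks_apply₂₂, Matrix.of_apply, Matrix.sub_apply, Matrix.smul_apply,
        Matrix.one_apply, smul_eq_mul, Matrix.zero_apply, mapMat, restr]
    · have h1 : i.1 ≠ j.1 := fun h => i.2 (h ▸ j.2)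
      have hσ : σ i.1 ≠ j.1 := fun h => (h2 i.1 i.2) (h ▸ j.2)
      simp [h1, hσ]
    · simp only [Subtype.ext_iff]
      split_ifs <;> simp

  rw [key, Matrix.det_fromBlocks_zero₂₁]

lemma det_drop [Fintype S] [DecidableEq S] (σ : S → S) {s : S} (hs : ∀ x, σ x ≠ s) (z : ℂ) :
    (1 - z • mapMat σ).det
      = (1 - z • mapMat (restr σ (fun x => ¬ x = s) (fun x _ => hs x))).det := by
  classical
  rw [← Matrix.det_submatrix_equiv_self (Equiv.sumCompl (fun x => ¬ x = s))
    (1 - z • mapMat σ)]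
  have key : (1 - z • mapMat σ).submatrix (Equiv.sumCompl (fun x => ¬ x = s))
        (Equiv.sumCompl (fun x => ¬ x = s)) =
      Matrix.fromBlocks (1 - z • mapMat (restr σ (fun x => ¬ x = s) (fun x _ => hs x)))
        0
        (Matrix.of fun (i : {x : S // ¬¬(x = s)}) (j : {x : S // ¬ x = s}) =>
          (1 - z • mapMat σ) i.1 j.1)
        1 := by
    ext i j
    rcases i with i | i <;> rcases j with j | j <;>
      simp only [Matrix.submatrix_apply, Equiv.sumCompl_apply_inl, Equiv.sumCompl_apply_inr,
        Matrix.fromBlocks_apply₁₁, Matrix.fromBlocks_apply₁₂, Matrix.fromBlocks_apply₂₁,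
        Matrix.fromBlocks_apply₂₂, Matrix.of_apply, Matrix.sub_apply, Matrix.smul_apply,
        Matrix.one_apply, smul_eq_mul, Matrix.zero_apply, mapMat, restr]
    · simp only [Subtype.ext_iff]
      split_ifs <;> simp
    · have hj : j.1 = s := not_not.mp j.2
      have h1 : i.1 ≠ j.1 := fun h => i.2 (h.trans hj)
      have h2 : σ i.1 ≠ j.1 := fun h => hs i.1 (h.trans hj)
      simp [h1, h2]
    · have hi : i.1 = s := not_not.mp i.2
      have hj : j.1 = s := not_not.mp j.2
      have hij : i = j := Subtype.ext (hi.trans hj.symm)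
      have h2 : σ j.1 ≠ j.1 := fun h => hs j.1 (h.trans hj)
      simp [hij, h2]
  rw [key, Matrix.det_fromBlocks_zero₁₂, Matrix.det_one, mul_one]


section Cycle

lemma zmod_iter (k : ℕ) (n : ℕ) (i : ZMod k) :
    (fun j : ZMod k => j + 1)^[n] i = i + (n : ZMod k) := by
  induction n with
  | zero => simp
  | succ n ih =>
    rw [Function.iterate_succ_apply', ih]
    push_cast
    ring

lemma fixc_zmod (k : ℕ) (hk : k ≠ 0) (n : ℕ) :
    fixc (fun j : ZMod k => j + 1) n = if k ∣ n then k else 0 := by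
  haveI : NeZero k := ⟨hk⟩
  rw [fixc]
  by_cases h : k ∣ n
  · rw [if_pos h]
    have hcond : ∀ i : ZMod k, (fun j : ZMod k => j + 1)^[n] i = i := by
      intro i
      rw [zmod_iter, (ZMod.natCast_eq_zero_iff n k).mpr h, add_zero]
    calc Nat.card {x : ZMod k // (fun j : ZMod k => j + 1)^[n] x = x}
        = Nat.card (ZMod k) := Nat.card_congr (Equiv.subtypeUnivEquiv hcond)
      _ = k := by rw [Nat.card_eq_fintype_card, ZMod.card]
  · rw [if_neg h]
    have : IsEmpty {x : ZMod k // (fun j : ZMod k => j + 1)^[n] x = x} := by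
      refine ⟨fun x => ?_⟩
      have hx := x.2
      rw [zmod_iter] at hx
      exact h ((ZMod.natCast_eq_zero_iff n k).mp (add_eq_left.mp hx))
    rw [Nat.card_of_isEmpty]

lemma two_perm {k : ℕ} (hk : k ≠ 0) (hk2 : (1 : ZMod k) ≠ 0) (π : Equiv.Perm (ZMod k))
    (h : ∀ i, π i = i ∨ π i = i - 1) (hπ : π ≠ 1) : π = Equiv.subRight (1 : ZMod k) := by
  haveI : NeZero k := ⟨hk⟩
  obtain ⟨j, hj⟩ : ∃ j, π j ≠ j := by
    by_contra hc; push_neg at hc; exact hπ (Equiv.ext hc)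
  have key : ∀ m : ℕ, π (j - (m : ZMod k)) = j - (m : ZMod k) - 1 := by
    intro m; induction m with
    | zero => simpa using (h j).resolve_left hj
    | succ m ih =>
      have hc : (j - ((m : ℕ) + 1 : ℕ) : ZMod k) = j - (m : ZMod k) - 1 := by
        push_cast; ring
      rcases h (j - (m : ZMod k) - 1) with h1 | h1
      · exfalso
        have heq := π.injective (h1.trans ih.symm)
        exact hk2 (by linear_combination -heq)
      · rw [hc]; exact h1
  ext x
  have hval : (((j - x).val : ℕ) : ZMod k) = j - x := by
    rw [ZMod.natCast_val, ZMod.cast_id]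
  have hx : j - (((j - x).val : ℕ) : ZMod k) = x := by rw [hval]; ring
  have : π x = x - 1 := by
    calc π x = π (j - (((j - x).val : ℕ) : ZMod k)) := by rw [hx]
      _ = j - (((j - x).val : ℕ) : ZMod k) - 1 := key _
      _ = x - 1 := by rw [hx]
  rw [this, Equiv.subRight_apply]

lemma addRight_pow (k : ℕ) (m : ℕ) :
    ((Equiv.addRight (1 : ZMod k))^m) 0 = (m : ZMod k) := by
  induction m with
  | zero => simp
  | succ m ih =>
    rw [pow_succ', Equiv.Perm.mul_apply, ih, Equiv.coe_addRight]
    push_cast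
    ring

lemma det_zmod (k : ℕ) [NeZero k] (z : ℂ) :
    (1 - z • mapMat (fun j : ZMod k => j + 1)).det = 1 - z^k := by
  have hk : k ≠ 0 := NeZero.ne k
  rcases eq_or_ne k 1 with rfl | hk1
  · haveI : Subsingleton (ZMod 1) := inferInstanceAs (Subsingleton (Fin 1))
    rw [Matrix.det_eq_elem_of_subsingleton _ 0]
    have h01 : ((0 : ZMod 1) + 1 = 0) := Subsingleton.elim _ _
    simp [mapMat, Matrix.one_apply, h01, pow_one]
  · have hk2 : (1 : ZMod k) ≠ 0 := by
      haveI : Fact (1 < k) := ⟨by omega⟩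
      exact one_ne_zero
    rw [Matrix.det_apply']
    set N := (1 - z • mapMat (fun j : ZMod k => j + 1)) with hN
    have hNab : ∀ a b : ZMod k, N a b =
        (if a = b then (1:ℂ) else 0) - z * (if a + 1 = b then 1 else 0) := by
      intro a b
      simp [hN, mapMat, Matrix.one_apply]
    have hterm : ∀ π : Equiv.Perm (ZMod k),
        π ∉ ({1, Equiv.subRight (1 : ZMod k)} : Finset (Equiv.Perm (ZMod k))) →
        (((Equiv.Perm.sign π : ℤ) : ℂ) * ∏ i, N (π i) i) = 0 := by
      intro π hπ
      simp only [Finset.mem_insert, Finset.mem_singleton] at hπ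
      push_neg at hπ
      have hall : ¬ (∀ i, π i = i ∨ π i = i - 1) :=
        fun hall => hπ.2 (two_perm hk hk2 π hall hπ.1)
      push_neg at hall
      obtain ⟨i, hi1, hi2⟩ := hall
      have hzero : N (π i) i = 0 := by
        rw [hNab]
        have hnb : ¬ ((π i) + 1 = i) := fun h => hi2 (by linear_combination h)
        simp [hi1, hnb]
      exact mul_eq_zero_of_right _ (Finset.prod_eq_zero (Finset.mem_univ i) hzero)
    rw [← Finset.sum_subset (Finset.subset_univ {1, Equiv.subRight (1 : ZMod k)})
      (fun π _ hπ => hterm π hπ)]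
    have hne : (1 : Equiv.Perm (ZMod k)) ≠ Equiv.subRight (1 : ZMod k) := by
      intro h
      have h0 := Equiv.ext_iff.mp h 0
      rw [Equiv.Perm.coe_one, id_eq, Equiv.subRight_apply] at h0
      exact hk2 (by linear_combination h0)
    rw [Finset.sum_pair hne]
    have t1 : (((Equiv.Perm.sign (1 : Equiv.Perm (ZMod k)) : ℤ) : ℂ)
        * ∏ i, N ((1 : Equiv.Perm (ZMod k)) i) i) = 1 := by
      rw [Equiv.Perm.sign_one]
      rw [Finset.prod_eq_one]
      · norm_num
      · intro i _
        rw [Equiv.Perm.coe_one, id_eq, hNab]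
        have hii : ¬ (i + 1 = i) := fun h => hk2 (by linear_combination h)
        simp [hii]
    have hsign : Equiv.Perm.sign (Equiv.subRight (1 : ZMod k)) = (-1)^(k+1) := by
      have hinv : Equiv.subRight (1 : ZMod k) = (Equiv.addRight (1 : ZMod k))⁻¹ := by
        ext x
        rw [Equiv.subRight_apply, Equiv.Perm.inv_def, Equiv.eq_symm_apply,
          Equiv.coe_addRight]
        ring
      rw [hinv, Equiv.Perm.sign_inv]
      have hcyc : (Equiv.addRight (1 : ZMod k)).IsCycle := by
        refine ⟨0, ?_, ?_⟩
        · rw [Equiv.coe_addRight]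
          exact fun h => hk2 (by linear_combination h)
        · intro y _
          refine ⟨(y.val : ℤ), ?_⟩
          rw [zpow_natCast, addRight_pow, ZMod.natCast_val, ZMod.cast_id]
      rw [hcyc.sign]
      have hsupp : (Equiv.addRight (1 : ZMod k)).support = Finset.univ := by
        ext x
        simp only [Equiv.Perm.mem_support, Finset.mem_univ, iff_true, Equiv.coe_addRight]
        exact fun h => hk2 (by linear_combination h)
      rw [hsupp, Finset.card_univ, ZMod.card, pow_succ, mul_neg_one]
    have t2 : (((Equiv.Perm.sign (Equiv.subRight (1 : ZMod k)) : ℤ) : ℂ)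
        * ∏ i, N ((Equiv.subRight (1 : ZMod k)) i) i) = -(z^k) := by
      rw [hsign]
      have hprod : ∏ i, N ((Equiv.subRight (1 : ZMod k)) i) i = (-z)^k := by
        have : ∀ i : ZMod k, N ((Equiv.subRight (1 : ZMod k)) i) i = -z := by
          intro i
          rw [Equiv.subRight_apply, hNab]
          have h1 : ¬ (i - 1 = i) := fun h => hk2 (by linear_combination -h)
          have h2 : i - 1 + 1 = i := by ring
          simp [h1, h2]
        rw [Finset.prod_congr rfl (fun i _ => this i), Finset.prod_const,
          Finset.card_univ, ZMod.card]
      rw [hprod]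
      have hcast : (((((-1 : ℤˣ))^(k+1) : ℤˣ) : ℤ) : ℂ) = (-1 : ℂ)^(k+1) := by
        push_cast
        ring
      rw [hcast, neg_pow z, ← mul_assoc, ← pow_add]
      have hodd : Odd (k + 1 + k) := ⟨k, by ring⟩
      rw [hodd.neg_one_pow]
      ring
    rw [t1, t2]
    ring

end Cycle


section Analytic

lemma cycle_exp (k : ℕ) (hk : k ≠ 0) {z : ℂ} (hz : ‖z‖ < 1) :
    Complex.exp (∑' n : ℕ, ((if k ∣ (n+1) then (k : ℂ) else 0) * z^(n+1) / ((n : ℂ)+1)))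
      * (1 - z^k) = 1 := by
  set w := z^k with hw
  have hwnorm : ‖w‖ < 1 := by
    rw [hw, norm_pow]
    exact pow_lt_one₀ (norm_nonneg z) hz hk
  have h1 : HasSum (fun n : ℕ => w^n / (n : ℂ)) (-Complex.log (1 - w)) :=
    Complex.hasSum_taylorSeries_neg_log hwnorm
  have h2 : HasSum (fun n : ℕ => w^(n+1) / (((n+1 : ℕ)) : ℂ)) (-Complex.log (1 - w)) := by
    refine (hasSum_nat_add_iff (f := fun n : ℕ => w^n / (n : ℂ)) 1).mpr ?_
    simpa using h1
  set f : ℕ → ℂ := fun n => (if k ∣ (n+1) then (k : ℂ) else 0) * z^(n+1) / ((n : ℂ)+1) with hf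
  set ι : ℕ → ℕ := fun m => k * (m+1) - 1 with hι
  have hι1 : ∀ m, ι m + 1 = k * (m+1) := by
    intro m
    have hpos : 0 < k * (m+1) := Nat.mul_pos (Nat.pos_of_ne_zero hk) (Nat.succ_pos m)
    simp only [hι]
    omega
  have hinj : Function.Injective ι := by
    intro a b hab
    have ha := hι1 a; have hb := hι1 b
    have hmul : k * (a+1) = k * (b+1) := by omega
    have := Nat.eq_of_mul_eq_mul_left (Nat.pos_of_ne_zero hk) hmul
    omega
  have hvan : ∀ n, n ∉ Set.range ι → f n = 0 := by
    intro n hn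
    simp only [hf]
    by_cases hd : k ∣ (n+1)
    · exfalso
      obtain ⟨m, hm⟩ := hd
      have hm1 : 1 ≤ m := by
        rcases Nat.eq_zero_or_pos m with rfl | h
        · omega
        · exact h
      refine hn ⟨m - 1, ?_⟩
      have := hι1 (m - 1)
      have hmm : m - 1 + 1 = m := by omega
      rw [hmm] at this
      omega
    · simp [hd]
  have hcomp : ∀ m, f (ι m) = w^(m+1) / (((m+1 : ℕ)) : ℂ) := by
    intro m
    have h1' := hι1 m
    have hd : k ∣ (ι m + 1) := h1' ▸ dvd_mul_right k (m+1)
    simp only [hf]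
    rw [if_pos hd]
    have hcast : ((ι m : ℂ)) + 1 = (k : ℂ) * ((m+1 : ℕ) : ℂ) := by
      have := congrArg (fun t : ℕ => (t : ℂ)) h1'
      push_cast at this ⊢
      linear_combination this
    have hpow : z^(ι m + 1) = w^(m+1) := by rw [h1', hw, ← pow_mul]
    rw [hpow, hcast]
    exact mul_div_mul_left _ _ (Nat.cast_ne_zero.mpr hk)
  have h3 : HasSum f (-Complex.log (1 - w)) := by
    refine (Function.Injective.hasSum_iff hinj hvan).mp ?_
    have : (f ∘ ι) = fun m => w^(m+1) / (((m+1 : ℕ)) : ℂ) := funext hcomp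
    rw [this]
    exact h2
  have hwne : (1 : ℂ) - w ≠ 0 := by
    intro h
    have : w = 1 := by linear_combination -h
    rw [this] at hwnorm
    simp at hwnorm
  rw [h3.tsum_eq, Complex.exp_neg, Complex.exp_log hwne]
  exact inv_mul_cancel₀ hwne

lemma block_eq [Fintype S] [DecidableEq S] (σ : S → S) (p : S → Prop) [DecidablePred p]
    (h1 : ∀ x, p x → p (σ x)) (z : ℂ) :
    (Matrix.of fun i j : {x // p x} => (1 - z • mapMat σ) i.1 j.1)
      = 1 - z • mapMat (restr σ p h1) := by
  ext i j
  simp only [Matrix.of_apply, Matrix.sub_apply, Matrix.smul_apply, Matrix.one_apply,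
    smul_eq_mul, mapMat, restr, Subtype.ext_iff]
  split_ifs <;> simp

lemma key_empty (S : Type u) [Fintype S] [DecidableEq S] [IsEmpty S] (σ : S → S) (z : ℂ) :
    Complex.exp (∑' n, zterm σ z n) * (1 - z • mapMat σ).det = 1 := by
  have h0 : ∀ n : ℕ, zterm σ z n = 0 := by
    intro n
    haveI : IsEmpty {x : S // σ^[n+1] x = x} := ⟨fun x => IsEmpty.elim ‹_› x.1⟩
    rw [zterm, fixc, Nat.card_of_isEmpty]
    simp
  rw [tsum_congr h0, tsum_zero, Complex.exp_zero, one_mul, Matrix.det_isEmpty]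

end Analytic

theorem key_ind : ∀ (NN : ℕ) (S : Type u) [Fintype S] [DecidableEq S] (σ : S → S),
    Fintype.card S ≤ NN → ∀ {z : ℂ}, ‖z‖ < 1 →
    Complex.exp (∑' n, zterm σ z n) * (1 - z • mapMat σ).det = 1 := by
  intro NN
  induction NN with
  | zero =>
    intro S _ _ σ hcard z hz
    haveI : IsEmpty S := Fintype.card_eq_zero_iff.mp (Nat.le_zero.mp hcard)
    exact key_empty S σ z
  | succ NN ih =>
    intro S _ _ σ hcard z hz
    rcases isEmpty_or_nonempty S with hS | hS
    · exact key_empty S σ z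
    · by_cases hsurj : Function.Surjective σ
      · -- surjective case: split off a cycle
        have hinj : Function.Injective σ := (Finite.injective_iff_surjective).mpr hsurj
        have x₀ : S := Classical.arbitrary S
        set σe : Equiv.Perm S := Equiv.ofBijective σ ⟨hinj, hsurj⟩ with hσe
        have hper : x₀ ∈ Function.periodicPts σ := by
          refine ⟨orderOf σe, orderOf_pos σe, ?_⟩
          show σ^[orderOf σe] x₀ = x₀
          have hcoe : σ^[orderOf σe] = ⇑(σe ^ orderOf σe) := (Equiv.Perm.coe_pow σe _).symm
          rw [hcoe, pow_orderOf_eq_one σe]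
          rfl
        set k := Function.minimalPeriod σ x₀ with hk
        have hk0 : k ≠ 0 := (Function.minimalPeriod_pos_of_mem_periodicPts hper).ne'
        haveI : NeZero k := ⟨hk0⟩
        have hkx : σ^[k] x₀ = x₀ := Function.iterate_minimalPeriod
        set C : S → Prop := fun x => ∃ i : ℕ, σ^[i] x₀ = x with hC
        haveI : DecidablePred C := Classical.decPred C
        have hCinv : ∀ x, C x → C (σ x) := by
          rintro x ⟨i, rfl⟩
          exact ⟨i+1, Function.iterate_succ_apply' σ i x₀⟩
        have hCcinv : ∀ x, ¬ C x → ¬ C (σ x) := by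
          intro x hx hcx
          apply hx
          obtain ⟨i, hi⟩ := hcx
          rcases i with _ | i
          · obtain ⟨m, hm⟩ : ∃ m, k = m + 1 := ⟨k - 1, by omega⟩
            refine ⟨m, hinj ?_⟩
            rw [← Function.iterate_succ_apply' σ m x₀]
            show σ^[m+1] x₀ = σ x
            rw [← hm, hkx]
            simpa using hi
          · exact ⟨i, hinj (by rw [← Function.iterate_succ_apply' σ i x₀]; exact hi)⟩
        set ρC := restr σ C hCinv with hρC
        set ρD := restr σ (fun x => ¬ C x) hCcinv with hρD
        have hiter_congr : ∀ a b : ℕ, (a : ZMod k) = (b : ZMod k) → σ^[a] x₀ = σ^[b] x₀ := by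
          intro a b hab
          have hmod : a % k = b % k := (ZMod.natCast_eq_natCast_iff a b k).mp hab
          rw [← Function.iterate_mod_minimalPeriod_eq (n := a),
            ← Function.iterate_mod_minimalPeriod_eq (n := b)]
          rw [← hk, hmod]
        set u : ZMod k → {x // C x} := fun i => ⟨σ^[i.val] x₀, ⟨i.val, rfl⟩⟩ with hu
        have hubij : Function.Bijective u := by
          constructor
          · intro a b hab
            have hval := congrArg Subtype.val hab
            have hv : a.val = b.val := by
              refine Function.iterate_injOn_Iio_minimalPeriod ?_ ?_ hval
              · exact ZMod.val_lt a
              · exact ZMod.val_lt b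
            exact ZMod.val_injective k hv
          · rintro ⟨x, i, rfl⟩
            refine ⟨(i : ZMod k), Subtype.ext ?_⟩
            show σ^[((i : ZMod k)).val] x₀ = σ^[i] x₀
            apply hiter_congr
            rw [ZMod.natCast_val, ZMod.cast_id]
        set e : ZMod k ≃ {x // C x} := Equiv.ofBijective u hubij with he
        have hcomm : ∀ i : ZMod k, ρC (e i) = e (i + 1) := by
          intro i
          apply Subtype.ext
          show σ (σ^[i.val] x₀) = σ^[(i+1).val] x₀
          rw [← Function.iterate_succ_apply' σ i.val x₀]
          apply hiter_congr
          push_cast [ZMod.natCast_val, ZMod.cast_id]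
          ring
        have hfixC : ∀ n, fixc ρC n = if k ∣ n then k else 0 := by
          intro n
          rw [← fixc_congr (σ := fun j : ZMod k => j + 1) e hcomm n, fixc_zmod k hk0 n]
        have hdetC : (1 - z • mapMat ρC).det = 1 - z^k := by
          rw [← det_congr (σ := fun j : ZMod k => j + 1) e hcomm z, det_zmod k z]
        have hcard_le : Fintype.card {x : S // ¬ C x} ≤ NN := by
          have h1 : Fintype.card {x : S // ¬ C x}
              = Fintype.card S - Fintype.card {x : S // C x} :=
            Fintype.card_subtype_compl _
          have h2 : 0 < Fintype.card {x : S // C x} :=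
            Fintype.card_pos_iff.mpr ⟨⟨x₀, ⟨0, rfl⟩⟩⟩
          omega
        have hsum1 : Summable (zterm ρC z) := summable_zterm ρC hz
        have hsum2 : Summable (zterm ρD z) := summable_zterm ρD hz
        have htsum : ∑' n, zterm σ z n = (∑' n, zterm ρC z n) + (∑' n, zterm ρD z n) := by
          rw [← Summable.tsum_add hsum1 hsum2]
          refine tsum_congr fun n => ?_
          rw [zterm, zterm, zterm, fixc_split σ C hCinv hCcinv (n+1)]
          push_cast
          ring
        rw [htsum, Complex.exp_add, det_split σ C hCcinv z, block_eq σ C hCinv z]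
        have hC1 : Complex.exp (∑' n, zterm ρC z n) * (1 - z • mapMat ρC).det = 1 := by
          rw [hdetC]
          have hts : ∑' n, zterm ρC z n
              = ∑' n : ℕ, ((if k ∣ (n+1) then (k : ℂ) else 0) * z^(n+1) / ((n : ℂ)+1)) := by
            refine tsum_congr fun n => ?_
            rw [zterm, hfixC (n+1)]
            simp only [Nat.cast_ite, Nat.cast_zero]
          rw [hts]
          exact cycle_exp k hk0 hz
        have hD1 : Complex.exp (∑' n, zterm ρD z n) * (1 - z • mapMat ρD).det = 1 :=
          ih {x : S // ¬ C x} ρD hcard_le hz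
        rw [mul_mul_mul_comm, hC1, hD1, one_mul]
      · -- non-surjective case: drop a point
        rw [Function.Surjective] at hsurj
        push_neg at hsurj
        obtain ⟨s, hs⟩ := hsurj
        have hs' : ∀ x, σ x ≠ s := fun x h => (hs x) h
        set τ := restr σ (fun x => ¬ x = s) (fun x _ => hs' x) with hτ
        have hfix : ∀ n : ℕ, fixc σ (n+1) = fixc τ (n+1) := by
          intro n
          rw [hτ, fixc_restr, fixc]
          apply Nat.card_congr
          refine Equiv.subtypeEquivRight fun x => ?_
          constructor
          · intro hfx
            refine ⟨hfx, fun hxs => hs' (σ^[n] x) ?_⟩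
            rw [← Function.iterate_succ_apply' σ n x, hfx, hxs]
          · exact And.left
        have hzsum : ∑' n, zterm σ z n = ∑' n, zterm τ z n :=
          tsum_congr fun n => by rw [zterm, zterm, hfix n]
        rw [hzsum, det_drop σ hs' z]
        apply ih
        · have h1 : Fintype.card {x : S // ¬ x = s}
              = Fintype.card S - Fintype.card {x : S // x = s} :=
            Fintype.card_subtype_compl _
          have h2 : Fintype.card {x : S // x = s} = 1 := Fintype.card_subtype_eq s
          have h3 : 0 < Fintype.card S := Fintype.card_pos_iff.mpr ⟨s⟩
          omega
        · exact hz


section GroupPart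

variable {F : Type u} [Group F]

/-- type synonym for the twisted conjugation action -/
def Tw (F : Type u) [Group F] (ψ : F →* F) : Type u := F

instance twAction (ψ : F →* F) : MulAction F (Tw F ψ) where
  smul x g := (x * (show F from g) * (ψ x)⁻¹ : F)
  one_smul g := by
    show (1 : F) * (show F from g) * (ψ 1)⁻¹ = (show F from g)
    simp
    exact one_mul (show F from g)
  mul_smul x y g := by
    show (x * y) * (show F from g) * (ψ (x * y))⁻¹
        = x * ((y * (show F from g) * (ψ y)⁻¹)) * (ψ x)⁻¹
    rw [map_mul, mul_inv_rev]
    group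
    exact congrArg (fun t : F => t * ψ y ^ (-1) * ψ x ^ (-1)) (mul_assoc x y (show F from g))

lemma card_range_orbit_eq (G : Type*) (X : Type*) [Group G] [MulAction G X] :
    Nat.card (Set.range fun x : X => MulAction.orbit G x)
      = Nat.card (MulAction.orbitRel.Quotient G X) := by
  apply Nat.card_congr
  symm
  refine Equiv.ofBijective (fun q => Quotient.liftOn q
    (fun x => (⟨MulAction.orbit G x, ⟨x, rfl⟩⟩ :
      Set.range fun x : X => MulAction.orbit G x)) ?_) ?_
  · intro a b hab
    exact Subtype.ext (MulAction.orbit_eq_iff.mpr (MulAction.orbitRel_apply.mp hab))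
  · constructor
    · intro q1 q2 h
      induction q1 using Quotient.inductionOn with
      | h a =>
      induction q2 using Quotient.inductionOn with
      | h b =>
      apply Quotient.sound
      exact MulAction.orbitRel_apply.mpr (MulAction.orbit_eq_iff.mp (congrArg Subtype.val h))
    · rintro ⟨_, x, rfl⟩
      exact ⟨Quotient.mk (MulAction.orbitRel G X) x, rfl⟩

lemma reidNum_eq_card_orbits [Fintype F] (ψ : F →* F) :
    reidNum ⇑ψ = Nat.card (MulAction.orbitRel.Quotient F (Tw F ψ)) := by
  classical
  have horb : ∀ g : F, {h : F | ∃ x : F, h = x * g * (ψ x)⁻¹}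
      = MulAction.orbit F (show Tw F ψ from g) := by
    intro g
    ext h
    simp only [Set.mem_setOf_eq, MulAction.mem_orbit_iff]
    constructor
    · rintro ⟨x, rfl⟩
      exact ⟨x, rfl⟩
    · rintro ⟨x, rfl⟩
      exact ⟨x, rfl⟩
  have hfun : (fun g : F => {h : F | ∃ x : F, h = x * g * (ψ x)⁻¹})
      = fun g : Tw F ψ => MulAction.orbit F g := funext horb
  rw [reidNum, hfun]
  exact card_range_orbit_eq F (Tw F ψ)

lemma tw_cond_iff (a g w : F) : a * g * w⁻¹ = g ↔ w = g⁻¹ * a * g := by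
  rw [mul_inv_eq_iff_eq_mul, mul_assoc, eq_inv_mul_iff_mul_eq]
  exact eq_comm

lemma card_orbits_mul [Fintype F] (ψ : F →* F) :
    Nat.card (MulAction.orbitRel.Quotient F (Tw F ψ)) * Nat.card F
      = ∑ x : F, Nat.card {g : F // ψ x = g⁻¹ * x * g} := by
  classical
  haveI : Fintype (Tw F ψ) := ‹Fintype F›
  haveI inst1 : ∀ a : F, Fintype (MulAction.fixedBy (Tw F ψ) a) := fun a => Fintype.ofFinite _
  haveI inst2 : Fintype (MulAction.orbitRel.Quotient F (Tw F ψ)) := Fintype.ofFinite _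
  have hb := MulAction.sum_card_fixedBy_eq_card_orbits_mul_card_group F (Tw F ψ)
  have hfix : ∀ a : F, Fintype.card (MulAction.fixedBy (Tw F ψ) a)
      = Nat.card {g : F // ψ a = g⁻¹ * a * g} := by
    intro a
    rw [← Nat.card_eq_fintype_card]
    apply Nat.card_congr
    refine ⟨fun g => ⟨(show F from g.1), ?_⟩, fun g => ⟨(show Tw F ψ from g.1), ?_⟩, ?_, ?_⟩
    · have hg := g.2
      have : a * (show F from g.1) * (ψ a)⁻¹ = (show F from g.1) := hg
      exact (tw_cond_iff a _ (ψ a)).mp this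
    · show a • (show Tw F ψ from g.1) = (show Tw F ψ from g.1)
      show a * g.1 * (ψ a)⁻¹ = g.1
      exact (tw_cond_iff a g.1 (ψ a)).mpr g.2
    · intro g; rfl
    · intro g; rfl
  calc Nat.card (MulAction.orbitRel.Quotient F (Tw F ψ)) * Nat.card F
      = Fintype.card (MulAction.orbitRel.Quotient F (Tw F ψ)) * Fintype.card F := by
        rw [Nat.card_eq_fintype_card, Nat.card_eq_fintype_card]
    _ = ∑ a : F, Fintype.card (MulAction.fixedBy (Tw F ψ) a) := hb.symm
    _ = ∑ a : F, Nat.card {g : F // ψ a = g⁻¹ * a * g} :=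
        Finset.sum_congr rfl fun a _ => hfix a


lemma conj_orbit_stab [Fintype F] (x : F) :
    Nat.card {y : F // ConjClasses.mk y = ConjClasses.mk x}
      * Nat.card {g : F // g⁻¹ * x * g = x} = Nat.card F := by
  classical
  haveI : Fintype (MulAction.orbit (ConjAct F) x) := Fintype.ofFinite _
  have h3 := MulAction.card_orbit_mul_card_stabilizer_eq_card_group (ConjAct F) x
  have h1 : Nat.card {y : F // ConjClasses.mk y = ConjClasses.mk x}
      = Fintype.card (MulAction.orbit (ConjAct F) x) := by
    rw [← Nat.card_eq_fintype_card]
    apply Nat.card_congr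
    symm
    refine Equiv.subtypeEquivRight fun y => ?_
    rw [ConjAct.orbit_eq_carrier_conjClasses, ConjClasses.mem_carrier_iff_mk_eq]
  have h2 : Nat.card {g : F // g⁻¹ * x * g = x}
      = Fintype.card (MulAction.stabilizer (ConjAct F) x) := by
    rw [← Nat.card_eq_fintype_card]
    apply Nat.card_congr
    refine ⟨fun g => ⟨ConjAct.toConjAct (g.1⁻¹), ?_⟩,
      fun u => ⟨(ConjAct.ofConjAct u.1)⁻¹, ?_⟩, ?_, ?_⟩
    · rw [MulAction.mem_stabilizer_iff, ConjAct.smul_def, ConjAct.ofConjAct_toConjAct, inv_inv]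
      exact g.2
    · have hu := u.2
      rw [MulAction.mem_stabilizer_iff, ConjAct.smul_def] at hu
      rw [inv_inv]
      exact hu
    · intro g; apply Subtype.ext; simp
    · intro u; apply Subtype.ext; simp
  rw [h1, h2, h3, Nat.card_eq_fintype_card, ConjAct.card]

lemma fixed_class_sum [Fintype F] (ψ : F →* F) :
    ∑ x : F, Nat.card {g : F // ψ x = g⁻¹ * x * g}
      = Nat.card {c : ConjClasses F // ConjClasses.map ψ c = c} * Nat.card F := by
  classical
  haveI : Fintype (ConjClasses F) := Fintype.ofFinite _
  have hcount : ∀ x : F, Nat.card {g : F // ψ x = g⁻¹ * x * g}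
      = if ConjClasses.mk (ψ x) = ConjClasses.mk x
        then Nat.card {g : F // g⁻¹ * x * g = x} else 0 := by
    intro x
    by_cases hc : ConjClasses.mk (ψ x) = ConjClasses.mk x
    · rw [if_pos hc]
      have hconj : IsConj x (ψ x) := (ConjClasses.mk_eq_mk_iff_isConj.mp hc).symm
      obtain ⟨c0, hc0⟩ := (isConj_iff).mp hconj
      -- hc0 : c0 * x * c0⁻¹ = ψ x
      set g₀ := c0⁻¹ with hg₀
      have hg : g₀⁻¹ * x * g₀ = ψ x := by
        rw [hg₀, inv_inv]
        exact hc0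
      apply Nat.card_congr
      refine ⟨fun a => ⟨a.1 * g₀⁻¹, ?_⟩, fun b => ⟨b.1 * g₀, ?_⟩, ?_, ?_⟩
      · have ha := a.2
        calc (a.1 * g₀⁻¹)⁻¹ * x * (a.1 * g₀⁻¹)
            = g₀ * (a.1⁻¹ * x * a.1) * g₀⁻¹ := by group
          _ = g₀ * ψ x * g₀⁻¹ := by rw [← ha]
          _ = x := by rw [← hg]; group
      · have hb := b.2
        calc ψ x = g₀⁻¹ * x * g₀ := hg.symm
          _ = g₀⁻¹ * (b.1⁻¹ * x * b.1) * g₀ := by rw [hb]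
          _ = (b.1 * g₀)⁻¹ * x * (b.1 * g₀) := by group
      · intro a; apply Subtype.ext; simp
      · intro b; apply Subtype.ext; simp
    · rw [if_neg hc]
      haveI : IsEmpty {g : F // ψ x = g⁻¹ * x * g} := by
        refine ⟨fun g => hc ?_⟩
        apply ConjClasses.mk_eq_mk_iff_isConj.mpr
        apply IsConj.symm
        rw [isConj_iff]
        exact ⟨g.1⁻¹, by rw [inv_inv]; exact g.2.symm⟩
      exact Nat.card_of_isEmpty
  rw [Finset.sum_congr rfl fun x _ => hcount x]
  rw [← Finset.sum_fiberwise Finset.univ (fun x : F => ConjClasses.mk x)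
    (fun x => if ConjClasses.mk (ψ x) = ConjClasses.mk x
      then Nat.card {g : F // g⁻¹ * x * g = x} else 0)]
  have hinner : ∀ c : ConjClasses F,
      (∑ x ∈ Finset.univ.filter (fun x : F => ConjClasses.mk x = c),
        if ConjClasses.mk (ψ x) = ConjClasses.mk x
          then Nat.card {g : F // g⁻¹ * x * g = x} else 0)
      = if ConjClasses.map ψ c = c then Nat.card F else 0 := by
    intro c
    by_cases hf : ConjClasses.map ψ c = c
    · rw [if_pos hf]
      have hmem : ∀ x : F, ConjClasses.mk x = c →
          ConjClasses.mk (ψ x) = ConjClasses.mk x := by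
        intro x hx
        have hmap : ConjClasses.map ψ (ConjClasses.mk x) = ConjClasses.mk (ψ x) := rfl
        rw [← hmap, hx, hf]
      set K := (Finset.univ.filter (fun x : F => ConjClasses.mk x = c)).card with hK
      have hKpos : 0 < K := by
        obtain ⟨a, ha⟩ := ConjClasses.mk_surjective c
        rw [hK]
        refine Finset.card_pos.mpr ⟨a, ?_⟩
        simp [ha]
      apply Nat.eq_of_mul_eq_mul_left hKpos
      rw [Finset.mul_sum]
      have hterm : ∀ x ∈ Finset.univ.filter (fun x : F => ConjClasses.mk x = c),
          K * (if ConjClasses.mk (ψ x) = ConjClasses.mk x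
            then Nat.card {g : F // g⁻¹ * x * g = x} else 0)
          = Nat.card F := by
        intro x hx
        have hxc : ConjClasses.mk x = c := (Finset.mem_filter.mp hx).2
        rw [if_pos (hmem x hxc)]
        have hKx : Nat.card {y : F // ConjClasses.mk y = ConjClasses.mk x} = K := by
          rw [hxc, hK, Nat.card_eq_fintype_card, Fintype.card_subtype]
        rw [← hKx]
        exact conj_orbit_stab x
      rw [Finset.sum_congr rfl hterm, Finset.sum_const, smul_eq_mul, ← hK]
    · rw [if_neg hf]
      apply Finset.sum_eq_zero
      intro x hx
      have hxc : ConjClasses.mk x = c := (Finset.mem_filter.mp hx).2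
      rw [if_neg]
      intro hcontra
      apply hf
      have hmap : ConjClasses.map ψ (ConjClasses.mk x) = ConjClasses.mk (ψ x) := rfl
      rw [← hxc, hmap, hcontra]
  rw [Finset.sum_congr rfl fun c _ => hinner c, ← Finset.sum_filter,
    Finset.sum_const, smul_eq_mul]
  congr 1
  rw [Nat.card_eq_fintype_card, Fintype.card_subtype]

theorem tbft [Fintype F] (ψ : F →* F) :
    reidNum ⇑ψ = Nat.card {c : ConjClasses F // ConjClasses.map ψ c = c} := by
  have h1 := reidNum_eq_card_orbits ψ
  have h2 := card_orbits_mul ψ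
  have h3 := fixed_class_sum ψ
  have hpos : 0 < Nat.card F := Nat.card_pos
  refine Nat.eq_of_mul_eq_mul_right hpos ?_
  rw [h1, h2, h3]

end GroupPart

section Assembly

variable {F : Type u} [Group F]

/-- iterate of a monoid hom as a monoid hom -/
def iterHom (φ : F →* F) : ℕ → (F →* F)
  | 0 => MonoidHom.id F
  | (n+1) => φ.comp (iterHom φ n)

lemma coe_iterHom (φ : F →* F) : ∀ n : ℕ, ⇑(iterHom φ n) = (⇑φ)^[n] := by
  intro n
  induction n with
  | zero => rfl
  | succ n ih =>
    show ⇑(φ.comp (iterHom φ n)) = (⇑φ)^[n+1]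
    rw [Function.iterate_succ']
    ext x
    simp [ih]

lemma map_iter (φ : F →* F) : ∀ (n : ℕ) (c : ConjClasses F),
    (fun c : ConjClasses F => ConjClasses.map φ c)^[n] c = ConjClasses.map (iterHom φ n) c := by
  intro n
  induction n with
  | zero =>
    intro c
    obtain ⟨a, rfl⟩ := ConjClasses.mk_surjective c
    rfl
  | succ n ih =>
    intro c
    rw [Function.iterate_succ_apply', ih c]
    obtain ⟨a, rfl⟩ := ConjClasses.mk_surjective c
    rfl

lemma reid_eq_fixc [Fintype F] (φ : F →* F) (n : ℕ) :
    reidNum ((⇑φ)^[n]) = fixc (fun c : ConjClasses F => ConjClasses.map φ c) n := by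
  rw [← coe_iterHom φ n, tbft (iterHom φ n), fixc]
  apply Nat.card_congr
  exact Equiv.subtypeEquivRight fun c => by rw [map_iter φ n c]

/-- the comparison linear map -/
noncomputable def Phi : (ConjClasses F → ℂ) →ₗ[ℂ] classFunctions F where
  toFun h := ⟨fun g => h (ConjClasses.mk g), by
    intro g x
    have hmk : ConjClasses.mk (x * g * x⁻¹) = ConjClasses.mk g := by
      rw [ConjClasses.mk_eq_mk_iff_isConj, isConj_iff]
      exact ⟨x⁻¹, by group⟩
    simp only [hmk]⟩
  map_add' := by intros; rfl
  map_smul' := by intros; rfl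

lemma Phi_bijective : Function.Bijective (Phi (F := F)) := by
  constructor
  · intro h₁ h₂ h
    funext c
    obtain ⟨a, rfl⟩ := ConjClasses.mk_surjective c
    have := congrArg Subtype.val h
    exact congrFun this a
  · intro f
    refine ⟨fun c => Quotient.liftOn c f.1 ?_, ?_⟩
    · intro a b hab
      have hconj : IsConj a b := hab
      obtain ⟨u, hu⟩ := isConj_iff.mp hconj.symm
      rw [← hu]
      exact f.2 b u
    · apply Subtype.ext
      rfl

noncomputable def Lsig (φ : F →* F) : (ConjClasses F → ℂ) →ₗ[ℂ] (ConjClasses F → ℂ) where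
  toFun h := fun c => h (ConjClasses.map φ c)
  map_add' := by intros; rfl
  map_smul' := by intros; rfl

end Assembly

end ReidZeta

theorem reidemeister_zeta_of_finite_group_rational
    {F : Type*} [Group F] [Fintype F] (φ : F →* F) :
    ∀ z : ℂ, ‖z‖ < 1 →
      Complex.exp (∑' n : ℕ,
          (reidNum ((⇑φ)^[n + 1]) : ℂ) * z ^ (n + 1) / (n + 1))
        = (LinearMap.det (LinearMap.id - z • classFunMap φ))⁻¹ := by
  intro z hz
  classical
  haveI : Fintype (ConjClasses F) := Fintype.ofFinite _
  set σφ : ConjClasses F → ConjClasses F := fun c => ConjClasses.map φ c with hσφ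
  have hkey := ReidZeta.key_ind (Fintype.card (ConjClasses F)) (ConjClasses F) σφ le_rfl hz
  have hsum : (∑' n : ℕ, (reidNum ((⇑φ)^[n + 1]) : ℂ) * z ^ (n + 1) / (n + 1))
      = ∑' n, ReidZeta.zterm σφ z n := by
    refine tsum_congr fun n => ?_
    rw [ReidZeta.zterm, ReidZeta.reid_eq_fixc φ (n+1)]
  -- determinant comparison
  set e : (ConjClasses F → ℂ) ≃ₗ[ℂ] classFunctions F :=
    LinearEquiv.ofBijective ReidZeta.Phi ReidZeta.Phi_bijective with he
  have hconj : classFunMap φ = e.conj (ReidZeta.Lsig φ) := by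
    apply LinearMap.ext
    intro f
    obtain ⟨h, rfl⟩ : ∃ h, e h = f := ⟨e.symm f, by simp⟩
    rw [LinearEquiv.conj_apply]
    simp only [LinearMap.coe_comp, Function.comp_apply, LinearEquiv.coe_coe,
      LinearEquiv.symm_apply_apply]
    rfl
  have hdet : LinearMap.det (LinearMap.id - z • classFunMap φ)
      = (1 - z • ReidZeta.mapMat σφ).det := by
    have h1 : LinearMap.id - z • classFunMap φ
        = e.conj (LinearMap.id - z • ReidZeta.Lsig φ) := by
      apply LinearMap.ext
      intro f
      rw [LinearEquiv.conj_apply]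
      simp only [LinearMap.sub_apply, LinearMap.smul_apply, LinearMap.id_apply,
        LinearMap.coe_comp, Function.comp_apply, LinearEquiv.coe_coe, map_sub, map_smul,
        LinearEquiv.apply_symm_apply]
      rw [hconj, LinearEquiv.conj_apply]
      simp only [LinearMap.coe_comp, Function.comp_apply, LinearEquiv.coe_coe]
    rw [h1, LinearEquiv.conj_apply]
    rw [show ((e : (ConjClasses F → ℂ) →ₗ[ℂ] classFunctions F).comp
        (LinearMap.id - z • ReidZeta.Lsig φ)).comp (e.symm : classFunctions F →ₗ[ℂ] (ConjClasses F → ℂ))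
      = (e : (ConjClasses F → ℂ) →ₗ[ℂ] classFunctions F).comp
        ((LinearMap.id - z • ReidZeta.Lsig φ).comp
          (e.symm : classFunctions F →ₗ[ℂ] (ConjClasses F → ℂ))) from LinearMap.comp_assoc _ _ _]
    rw [LinearMap.det_conj, ← LinearMap.det_toMatrix (Pi.basisFun ℂ (ConjClasses F))]
    congr 1
    rw [map_sub, map_smul, LinearMap.toMatrix_id]
    congr 1
    congr 1
    ext i j
    rw [LinearMap.toMatrix_apply]
    simp only [Pi.basisFun_apply, Pi.basisFun_repr]
    show (Pi.single j 1 : ConjClasses F → ℂ) (σφ i) = ReidZeta.mapMat σφ i j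
    rw [Pi.single_apply]
    simp [ReidZeta.mapMat]
  rw [hsum, hdet]
  exact eq_inv_of_mul_eq_one_left hkey
end

section
/- Let F be a nontrivial finite group, Γ = ⊕_{i∈ℤ} F the restricted direct sum (direct sum) of copies of F indexed by ℤ, and φ : Γ → Γ the right shift automorphism, (φ(g))_i = g_{i−1}. Then the Reidemeister number of φ equals |F|: R(φ) = |F|. -/
variable (F : Type*) [Group F]

/-- The restricted direct product `⊕_{i∈ℤ} F`: finitely supported functions `ℤ → F`,
as a subgroup of the full product. -/
def DirSum : Subgroup (ℤ → F) where
  carrier := {g | (Function.mulSupport g).Finite}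
  mul_mem' := by
    intro a b ha hb
    exact ((ha.union hb).subset (Function.mulSupport_mul a b))
  one_mem' := by
    simp [Function.mulSupport_one]
  inv_mem' := by
    intro a ha
    simpa [Function.mulSupport_inv] using ha

/-- The right shift automorphism `(φ g)_i = g_{i-1}` on `⊕_{i∈ℤ} F`. -/
def shiftHom : DirSum F →* DirSum F where
  toFun g := ⟨fun i => g.1 (i - 1), by
    have : Function.mulSupport (fun i => g.1 (i - 1)) ⊆
        (fun t => t + 1) '' Function.mulSupport g.1 := by
      intro i hi
      exact ⟨i - 1, hi, by ring⟩
    exact (g.2.image _).subset this⟩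
  map_one' := rfl
  map_mul' := by intros; rfl

namespace RNaux

variable {G : Type*} [Group G]

/-- `tp a N k = a N * a (N-1) * ⋯ * a (N-k+1)`. -/
def tp (a : ℤ → G) (N : ℤ) : ℕ → G
  | 0 => 1
  | k+1 => tp a N k * a (N - k)

lemma tp_twist (x a : ℤ → G) (N : ℤ) :
    ∀ k : ℕ, tp (fun i => x i * a i * (x (i-1))⁻¹) N k = x N * tp a N k * (x (N - k))⁻¹
  | 0 => by simp [tp]
  | k+1 => by
    have ih := tp_twist x a N k
    simp only [tp, ih]
    have h : (N - (k+1:ℕ) : ℤ) = N - k - 1 := by push_cast; ring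
    rw [h]
    group

lemma tp_top (a : ℤ → G) (N : ℤ) (h : a (N+1) = 1) :
    ∀ k : ℕ, tp a (N+1) (k+1) = tp a N k
  | 0 => by simp [tp, h]
  | k+1 => by
    have ih := tp_top a N h k
    show tp a (N+1) (k+1) * a (N+1 - ((k:ℤ)+1)) = tp a N k * a (N - k)
    rw [ih]
    congr 1
    ring_nf

lemma tp_bot (a : ℤ → G) (N : ℤ) (k : ℕ) (h : a (N - k) = 1) :
    tp a N (k+1) = tp a N k := by
  simp [tp, h]

/-- A bound on the support of an element of `DirSum`. -/
noncomputable def bnd (a : DirSum G) : ℕ := a.2.toFinset.sup Int.natAbs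

lemma apply_eq_one (a : DirSum G) {j : ℤ} (h : bnd a < j.natAbs) : a.1 j = 1 := by
  by_contra hj
  have : j ∈ a.2.toFinset := by
    simp [Set.Finite.mem_toFinset, Function.mulSupport, hj]
  have hle : j.natAbs ≤ bnd a := Finset.le_sup (f := Int.natAbs) this
  omega

noncomputable def Phi (a : DirSum G) : G := tp a.1 (bnd a) (2 * bnd a + 1)

lemma Phi_eq' (a : DirSum G) (N : ℕ) (h : bnd a ≤ N) :
    tp a.1 N (2 * N + 1) = Phi a := by
  induction N, h using Nat.le_induction with
  | base => rfl
  | succ N hN ih =>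
    have h1 : a.1 ((N:ℤ)+1) = 1 := apply_eq_one a (by omega)
    have h2 : a.1 ((N:ℤ) - ((2*N+1 : ℕ) : ℤ)) = 1 := apply_eq_one a (by omega)
    have e1 : ((N+1 : ℕ) : ℤ) = (N:ℤ) + 1 := by push_cast; ring
    have e2 : 2 * (N+1) + 1 = (2*N+1+1) + 1 := by omega
    rw [e1, e2, tp_top a.1 N h1 (2*N+1+1), tp_bot a.1 N (2*N+1) h2, ih]

lemma coe_twist (x a : DirSum G) (i : ℤ) :
    (x * a * (shiftHom G x)⁻¹).1 i = x.1 i * a.1 i * (x.1 (i-1))⁻¹ := rfl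

lemma Phi_invariant (x a : DirSum G) : Phi (x * a * (shiftHom G x)⁻¹) = Phi a := by
  set b := x * a * (shiftHom G x)⁻¹ with hb
  set N : ℕ := (bnd a ⊔ bnd b ⊔ bnd x) + 1 with hN
  have hbfun : b.1 = fun i => x.1 i * a.1 i * (x.1 (i-1))⁻¹ := rfl
  have h1 : tp b.1 N (2 * N + 1) = Phi b := Phi_eq' b N (by omega)
  have h2 : tp a.1 N (2 * N + 1) = Phi a := Phi_eq' a N (by omega)
  have h3 := tp_twist x.1 a.1 (N : ℤ) (2 * N + 1)
  rw [← hbfun] at h3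
  have hx1 : x.1 (N : ℤ) = 1 := apply_eq_one x (by omega)
  have hx2 : x.1 ((N : ℤ) - ((2 * N + 1 : ℕ) : ℤ)) = 1 := apply_eq_one x (by omega)
  rw [← h1, ← h2, h3, hx1, hx2]
  group

/-- delta at 0 -/
def dlt (c : G) : DirSum G := ⟨fun i => if i = 0 then c else 1, by
  apply Set.Finite.subset (Set.finite_singleton (0:ℤ))
  intro i hi
  simp only [Function.mem_mulSupport] at hi
  by_contra h
  simp only [Set.mem_singleton_iff] at h
  exact hi (if_neg h)⟩

lemma bnd_dlt (c : G) : bnd (dlt c) = 0 := by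
  apply Nat.le_zero.mp
  apply Finset.sup_le
  intro j hj
  have : j ∈ Function.mulSupport (dlt c).1 := (Set.Finite.mem_toFinset _).mp hj
  simp only [Function.mem_mulSupport] at this
  by_contra h
  have hj0 : j ≠ 0 := by omega
  exact this (if_neg hj0)

lemma Phi_dlt (c : G) : Phi (dlt c) = c := by
  have := Phi_eq' (dlt c) 0 (by rw [bnd_dlt])
  rw [← this]
  show tp (dlt c).1 0 0 * (dlt c).1 (0 - (0:ℕ)) = c
  simp [tp, dlt]

lemma exists_twist_to_dlt (a : DirSum G) :
    ∃ x : DirSum G, dlt (Phi a) = x * a * (shiftHom G x)⁻¹ := by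
  set c := Phi a with hc
  obtain ⟨N, hNa⟩ : ∃ N : ℕ, bnd a < N := ⟨bnd a + 1, by omega⟩
  set s : ℤ → G := fun i => tp a.1 N ((N - i).toNat) with hs
  have hstep : ∀ i : ℤ, s (i - 1) = s i * a.1 i := by
    intro i
    by_cases hi : i ≤ N
    · have hk : ((N:ℤ) - (i-1)).toNat = ((N:ℤ) - i).toNat + 1 := by omega
      have hk2 : (((N:ℤ) - i).toNat : ℤ) = (N:ℤ) - i := by omega
      simp only [hs, hk, tp, hk2]
      congr 2
      ring_nf
    · have h0 : ((N:ℤ) - (i-1)).toNat = 0 := by omega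
      have h1 : ((N:ℤ) - i).toNat = 0 := by omega
      have ha : a.1 i = 1 := apply_eq_one a (by omega)
      simp [hs, h0, h1, tp, ha]
  have hsc : ∀ n : ℕ, s (-(N:ℤ) - 1 - n) = c := by
    intro n
    induction n with
    | zero =>
      have : ((N:ℤ) - (-(N:ℤ) - 1 - (0:ℕ))).toNat = 2 * N + 1 := by omega
      simp only [hs, this]
      exact Phi_eq' a N (by omega)
    | succ n ih =>
      have he : (-(N:ℤ) - 1 - ((n+1 : ℕ):ℤ)) = (-(N:ℤ) - 1 - (n:ℤ)) - 1 := by push_cast; ring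
      have ha : a.1 (-(N:ℤ) - 1 - (n:ℤ)) = 1 := apply_eq_one a (by omega)
      rw [he, hstep, ha, mul_one, ih]
  set g : ℤ → G := fun i => if 0 ≤ i then s i else c⁻¹ * s i with hg
  have hgfin : (Function.mulSupport g).Finite := by
    apply Set.Finite.subset (Set.finite_Icc (-(N:ℤ) - 1) N)
    intro i hi
    simp only [Function.mem_mulSupport] at hi
    simp only [Set.mem_Icc]
    constructor
    · by_contra h
      push_neg at h
      have hi0 : ¬ (0 ≤ i) := by omega
      have : s i = c := by
        have : i = -(N:ℤ) - 1 - ((-(N:ℤ) - 1 - i).toNat : ℤ) := by omega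
        rw [this]
        exact hsc _
      exact hi (by simp [hg, hi0, this])
    · by_contra h
      push_neg at h
      have : ((N:ℤ) - i).toNat = 0 := by omega
      exact hi (by simp [hg, hs, this, tp, (by omega : (0:ℤ) ≤ i)])
  refine ⟨⟨g, hgfin⟩, ?_⟩
  apply Subtype.ext
  funext i
  rw [coe_twist]
  show (dlt c).1 i = g i * a.1 i * (g (i-1))⁻¹
  rcases lt_trichotomy i 0 with hi | hi | hi
  · have h1 : ¬ (0 ≤ i) := by omega
    have h2 : ¬ (0 ≤ i - 1) := by omega
    simp only [hg, if_neg h1, if_neg h2, hstep, dlt, if_neg (by omega : ¬ i = 0)]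
    group
  · subst hi
    have h1 : (0:ℤ) ≤ 0 := le_refl 0
    have h2 : ¬ (0 ≤ (0:ℤ) - 1) := by omega
    have hd : (dlt c).1 0 = c := by simp [dlt]
    rw [hd]
    simp only [hg, if_pos h1, if_neg h2, hstep]
    group
  · have h1 : 0 ≤ i := by omega
    have h2 : 0 ≤ i - 1 := by omega
    simp only [hg, if_pos h1, if_pos h2, hstep, dlt, if_neg (by omega : ¬ i = 0)]
    group

lemma class_eq (a b x : DirSum G) (h : b = x * a * (shiftHom G x)⁻¹) :
    {h : DirSum G | ∃ y : DirSum G, h = y * a * (shiftHom G y)⁻¹}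
      = {h : DirSum G | ∃ y : DirSum G, h = y * b * (shiftHom G y)⁻¹} := by
  have ha : a = x⁻¹ * b * (shiftHom G x⁻¹)⁻¹ := by
    rw [h]; simp [mul_assoc]
  ext z
  constructor
  · rintro ⟨y, rfl⟩
    exact ⟨y * x⁻¹, by rw [ha]; simp [mul_assoc]⟩
  · rintro ⟨y, rfl⟩
    exact ⟨y * x, by rw [h]; simp [mul_assoc]⟩

end RNaux

open RNaux in
theorem reidemeister_number_of_shift
    (F : Type*) [Group F] [Finite F] [Nontrivial F] :
    Nat.card (Set.range fun g : DirSum F =>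
        {h : DirSum F | ∃ x : DirSum F, h = x * g * (shiftHom F x)⁻¹})
      = Nat.card F := by
  set C : DirSum F → Set (DirSum F) :=
    fun g => {h : DirSum F | ∃ x : DirSum F, h = x * g * (shiftHom F x)⁻¹} with hC
  have key : Function.Bijective (fun c : F => (⟨C (dlt c), dlt c, rfl⟩ : Set.range C)) := by
    constructor
    · intro c c' hcc
      have hset : C (dlt c) = C (dlt c') := congrArg Subtype.val hcc
      have hmem : dlt c' ∈ C (dlt c) := by
        rw [hset]
        exact ⟨1, by simp⟩
      obtain ⟨x, hx⟩ := hmem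
      have := Phi_invariant x (dlt c)
      rw [← hx, Phi_dlt, Phi_dlt] at this
      exact this.symm
    · rintro ⟨S, a, rfl⟩
      refine ⟨Phi a, ?_⟩
      apply Subtype.ext
      show C (dlt (Phi a)) = C a
      obtain ⟨x, hx⟩ := exists_twist_to_dlt a
      exact (class_eq a (dlt (Phi a)) x hx).symm
  exact (Nat.card_eq_of_bijective _ key).symm
end

section
/- Let F be a finite group, Γ = ⊕_{i∈ℤ} F, and φ the right shift automorphism. Then for every n ≥ 1, the Reidemeister number of φⁿ equals |F|ⁿ: R(φⁿ) = |F|ⁿ. -/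
variable (F : Type*) [Group F]

namespace RAux

variable {F}

lemma iter_coe (n : ℕ) (x : DirSum F) (i : ℤ) :
    (((⇑(shiftHom F))^[n] x) : ℤ → F) i = (x : ℤ → F) (i - n) := by
  induction n generalizing i with
  | zero => simp
  | succ m ih =>
    rw [Function.iterate_succ_apply']
    show (((⇑(shiftHom F))^[m] x) : ℤ → F) (i - 1) = (x : ℤ → F) (i - (m + 1))
    rw [ih]
    congr 1
    push_cast
    ring

lemma coord_rel (n : ℕ) (x g h : DirSum F)
    (hx : h = x * g * (((⇑(shiftHom F))^[n] x))⁻¹) (i : ℤ) :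
    (h : ℤ → F) i = (x : ℤ → F) i * (g : ℤ → F) i * ((x : ℤ → F) (i - n))⁻¹ := by
  subst hx
  show (x : ℤ → F) i * (g : ℤ → F) i *
      ((((⇑(shiftHom F))^[n] x) : ℤ → F) i)⁻¹ = _
  rw [iter_coe]

/-- the embedding of a tuple as an element supported on `[0, n)` -/
def emb (n : ℕ) (v : Fin n → F) : ℤ → F :=
  fun i => if h : 0 ≤ i ∧ i < n then v ⟨i.toNat, by omega⟩ else 1

lemma emb_fin (n : ℕ) (v : Fin n → F) (r : Fin n) : emb n v (r : ℤ) = v r := by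
  have h : 0 ≤ ((r : ℕ) : ℤ) ∧ ((r : ℕ) : ℤ) < n := by
    constructor <;> [positivity; exact_mod_cast r.2]
  rw [emb, dif_pos h]
  exact congrArg v (Fin.ext (by simp))

lemma emb_ne (n : ℕ) (v : Fin n → F) (i : ℤ) (h : ¬ (0 ≤ i ∧ i < n)) :
    emb n v i = 1 := dif_neg h

lemma emb_fin_support (n : ℕ) (v : Fin n → F) :
    (Function.mulSupport (emb n v)).Finite := by
  apply (Set.finite_Icc (0 : ℤ) n).subset
  intro i hi
  by_contra hc
  simp only [Set.mem_Icc, not_and_or, not_le] at hc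
  exact hi (emb_ne n v i (by omega))

/-- element of `DirSum` from a tuple -/
def embD (n : ℕ) (v : Fin n → F) : DirSum F := ⟨emb n v, emb_fin_support n v⟩

/-- downward partial products: `pp g n m i = g i * g (i-n) * ⋯ * g (i-(m-1)n)` -/
def pp (g : ℤ → F) (n : ℤ) : ℕ → ℤ → F
  | 0, _ => 1
  | (m+1), i => g i * pp g n m (i - n)

/-- upward partial products: `zp g n m i = g (i+mn) * ⋯ * g (i+2n) * g (i+n)` -/
def zp (g : ℤ → F) (n : ℤ) : ℕ → ℤ → F
  | 0, _ => 1
  | (m+1), i => zp g n m (i + n) * g (i + n)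

lemma pp_tail (g : ℤ → F) (n : ℤ) (m : ℕ) (i : ℤ) :
    pp g n (m+1) i = pp g n m i * g (i - n * m) := by
  induction m generalizing i with
  | zero => simp [pp]
  | succ k ih =>
    rw [pp, ih, pp, mul_assoc]
    congr 2
    push_cast
    ring_nf

lemma pp_stab (g : ℤ → F) (n : ℤ) (i : ℤ) (t : ℕ)
    (h1 : ∀ k : ℕ, t ≤ k → g (i - n * k) = 1) :
    ∀ m : ℕ, t ≤ m → pp g n m i = pp g n t i := by
  intro m hm
  induction m with
  | zero =>
    obtain rfl : t = 0 := by omega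
    rfl
  | succ k ih =>
    rcases Nat.lt_or_ge t (k+1) with h | h
    · rw [pp_tail, h1 k (by omega), mul_one, ih (by omega)]
    · obtain rfl : t = k + 1 := by omega
      rfl

lemma zp_head (g : ℤ → F) (n : ℤ) (m : ℕ) (i : ℤ) :
    zp g n (m+1) i = g (i + n * (m+1)) * zp g n m i := by
  induction m generalizing i with
  | zero => simp [zp]
  | succ k ih =>
    rw [zp, ih, zp, mul_assoc]
    congr 2
    push_cast
    ring_nf

lemma zp_stab (g : ℤ → F) (n : ℤ) (i : ℤ) (t : ℕ)
    (h1 : ∀ k : ℕ, t < k → g (i + n * k) = 1) :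
    ∀ m : ℕ, t ≤ m → zp g n m i = zp g n t i := by
  intro m hm
  induction m with
  | zero =>
    obtain rfl : t = 0 := by omega
    rfl
  | succ k ih =>
    rcases Nat.lt_or_ge t (k+1) with h | h
    · have h2 := h1 (k+1) h
      push_cast at h2
      rw [zp_head, h2, one_mul, ih (by omega)]
    · obtain rfl : t = k + 1 := by omega
      rfl

end RAux

open RAux Function in
theorem reidemeister_number_of_shift_iterate
    (F : Type*) [Group F] [Finite F] :
    ∀ n : ℕ, 1 ≤ n →
      Nat.card (Set.range fun g : DirSum F =>
          {h : DirSum F | ∃ x : DirSum F, h = x * g * ((⇑(shiftHom F))^[n] x)⁻¹})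
        = (Nat.card F) ^ n := by
  intro n hn
  have hn' : (1 : ℤ) ≤ (n : ℤ) := by exact_mod_cast hn
  set C : DirSum F → Set (DirSum F) := fun g =>
    {h : DirSum F | ∃ x : DirSum F, h = x * g * ((⇑(shiftHom F))^[n] x)⁻¹} with hC
  -- twisted conjugate elements have the same class
  have class_eq : ∀ g h : DirSum F, h ∈ C g → C g = C h := by
    intro g h ⟨x, hx⟩
    ext k
    simp only [hC, Set.mem_setOf_eq]
    constructor
    · rintro ⟨u, hu⟩
      refine ⟨u * x⁻¹, ?_⟩
      rw [hu, hx]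
      simp only [iterate_map_mul, iterate_map_inv, mul_inv_rev, inv_inv]
      group
    · rintro ⟨u, hu⟩
      refine ⟨u * x, ?_⟩
      rw [hu, hx]
      simp only [iterate_map_mul, iterate_map_inv, mul_inv_rev, inv_inv]
      group
  -- the bijection
  have key : Function.Bijective (fun v : Fin n → F => (⟨C (embD n v), ⟨_, rfl⟩⟩ : Set.range C)) := by
    constructor
    · -- injective
      intro v w hvw
      have hmem : embD n w ∈ C (embD n v) := by
        have h1 : C (embD n v) = C (embD n w) := congrArg Subtype.val hvw
        rw [h1]
        exact ⟨1, by simp⟩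
      obtain ⟨x, hx⟩ := hmem
      have hrel := coord_rel n x (embD n v) (embD n w) hx
      set X : ℤ → F := (x : ℤ → F) with hX
      have hXfin : (Function.mulSupport X).Finite := x.2
      -- relation outside [0,n): X i = X (i - n)
      have hout : ∀ i : ℤ, ¬ (0 ≤ i ∧ i < n) → X i = X (i - n) := by
        intro i hi
        have := hrel i
        rw [show ((embD n w : ℤ → F) i) = emb n w i from rfl,
          show ((embD n v : ℤ → F) i) = emb n v i from rfl,
          emb_ne n w i hi, emb_ne n v i hi, mul_one] at this
        exact mul_inv_eq_one.mp this.symm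
      obtain ⟨B, hB⟩ := hXfin.bddAbove
      obtain ⟨B', hB'⟩ := hXfin.bddBelow
      have hXhigh : ∀ i : ℤ, B < i → X i = 1 := by
        intro i hi
        by_contra hne
        exact absurd (hB hne) (by omega)
      have hXlow : ∀ i : ℤ, i < B' → X i = 1 := by
        intro i hi
        by_contra hne
        exact absurd (hB' hne) (by omega)
      funext r
      -- upward: X r = X (r + n * k)
      have hup : ∀ k : ℕ, X ((r : ℤ) + n * k) = X (r : ℤ) := by
        intro k
        induction k with
        | zero => simp
        | succ m ih =>
          push_cast
          push_cast at ih
          have hr : (0:ℤ) ≤ (r:ℤ) := by positivity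
          have hm0 : (0:ℤ) ≤ (m:ℤ) := by positivity
          have hge : (n : ℤ) ≤ (r : ℤ) + (n:ℤ) * ((m:ℤ) + 1) := by nlinarith
          rw [hout ((r : ℤ) + (n:ℤ) * ((m:ℤ) + 1)) (by omega),
            show (r : ℤ) + (n:ℤ) * ((m:ℤ)+1) - n = (r:ℤ) + (n:ℤ) * (m:ℤ) by ring, ih]
      have hXr : X (r : ℤ) = 1 := by
        set k : ℕ := (B + 1 - r).toNat with hk
        have hbig : B < (r : ℤ) + n * k := by
          have h1 : (k : ℤ) ≤ n * k := le_mul_of_one_le_left (by positivity) hn'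
          have hr : (0:ℤ) ≤ (r:ℤ) := by positivity
          omega
        rw [← hup k]
        exact hXhigh _ hbig
      -- downward: X (r - n) = 1
      have hdown : ∀ k : ℕ, X ((r : ℤ) - n - n * k) = X ((r : ℤ) - n) := by
        intro k
        induction k with
        | zero => simp
        | succ m ih =>
          push_cast
          push_cast at ih
          have hm0 : (0:ℤ) ≤ (n:ℤ) * (m:ℤ) := by positivity
          have hrn : (r : ℤ) < n := by exact_mod_cast r.2
          have hlt : (r : ℤ) - n - (n:ℤ) * (m:ℤ) < 0 := by omega
          rw [← ih, hout ((r : ℤ) - n - (n:ℤ) * (m:ℤ)) (by omega)]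
          congr 1
          ring
      have hXrn : X ((r : ℤ) - n) = 1 := by
        set k : ℕ := ((r : ℤ) - n - B' + 1).toNat with hk
        have hsmall : (r : ℤ) - n - n * k < B' := by
          have h1 : (k : ℤ) ≤ n * k := le_mul_of_one_le_left (by positivity) hn'
          omega
        rw [← hdown k]
        exact hXlow _ hsmall
      have := hrel (r : ℤ)
      rw [show ((embD n w : ℤ → F) (r:ℤ)) = emb n w (r:ℤ) from rfl,
        show ((embD n v : ℤ → F) (r:ℤ)) = emb n v (r:ℤ) from rfl,
        emb_fin, emb_fin, hXr, hXrn] at this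
      simpa using this.symm
    · -- surjective
      rintro ⟨S, g, hg⟩
      -- find a bound N for the support of g
      set G : ℤ → F := (g : ℤ → F) with hG
      have hGfin : (Function.mulSupport G).Finite := g.2
      obtain ⟨B, hB⟩ := hGfin.bddAbove
      obtain ⟨B', hB'⟩ := hGfin.bddBelow
      obtain ⟨N, hN⟩ : ∃ N : ℕ, ∀ i : ℤ, (i < -(N:ℤ) ∨ (N:ℤ) < i) → G i = 1 := by
        refine ⟨(max B (-B')).toNat, fun i hi => ?_⟩
        by_contra hne
        have h1 := hB hne
        have h2 := hB' hne
        rcases hi with h | h <;> omega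
      -- recurrences for the partial products
      have hYrec : ∀ i : ℤ, pp G (n:ℤ) ((i + N + 1).toNat) i
          = G i * pp G (n:ℤ) ((i - n + N + 1).toNat) (i - n) := by
        intro i
        rcases le_or_gt (i + N + 1) 0 with h | h
        · have h0 : (i + N + 1).toNat = 0 := by omega
          have h0' : (i - n + N + 1).toNat = 0 := by omega
          have hGi : G i = 1 := hN i (by omega)
          rw [h0, h0', hGi]
          simp [pp]
        · have h0 : (i + N + 1).toNat = (i + N).toNat + 1 := by omega
          rw [h0, show pp G (n:ℤ) ((i + N).toNat + 1) i
              = G i * pp G (n:ℤ) ((i + N).toNat) (i - n) from rfl]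
          congr 1
          exact pp_stab G n (i - n) ((i - n + N + 1).toNat)
            (fun k hk => hN _ (by
              left
              have h1 : (i - n + N + 1 : ℤ) ≤ k := by omega
              have h2 : (k : ℤ) ≤ n * k := le_mul_of_one_le_left (by positivity) hn'
              omega))
            ((i + N).toNat) (by omega)
      have hcondZ : ∀ i : ℤ, ∀ k : ℕ, (N - i).toNat < k → G (i + n * k) = 1 := by
        intro i k hk
        refine hN _ (Or.inr ?_)
        have h1 : (N - i + 1 : ℤ) ≤ k := by omega
        have h2 : (k : ℤ) ≤ n * k := le_mul_of_one_le_left (by positivity) hn'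
        omega
      have hZrec : ∀ i : ℤ, zp G (n:ℤ) ((N + 1 - (i - n)).toNat) (i - n)
          = zp G (n:ℤ) ((N + 1 - i).toNat) i * G i := by
        intro i
        rcases le_or_gt (N + 1 - (i - n)) 0 with h | h
        · have h0 : (N + 1 - (i - n)).toNat = 0 := by omega
          have hGi : G i = 1 := hN i (by omega)
          rw [h0, hGi, mul_one,
            zp_stab G n i ((N - i).toNat) (hcondZ i) ((N + 1 - i).toNat) (by omega)]
          have h1 : (N - i).toNat = 0 := by omega
          rw [h1]
          rfl
        · obtain ⟨m', hm'⟩ : ∃ m', (N + 1 - (i - n)).toNat = m' + 1 :=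
            ⟨(N + 1 - (i - n)).toNat - 1, by omega⟩
          rw [hm', show zp G (n:ℤ) (m' + 1) (i - n)
              = zp G (n:ℤ) m' (i - n + n) * G (i - n + n) from rfl,
            show i - (n:ℤ) + n = i by ring]
          congr 1
          rw [zp_stab G n i ((N - i).toNat) (hcondZ i) m' (by omega),
            zp_stab G n i ((N - i).toNat) (hcondZ i) ((N + 1 - i).toNat) (by omega)]
      -- vanishing far away
      have hYlow : ∀ i : ℤ, i < -(N : ℤ) → pp G (n:ℤ) ((i + N + 1).toNat) i = 1 := by
        intro i hi
        have h0 : (i + N + 1).toNat = 0 := by omega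
        rw [h0]
        rfl
      have hZhigh : ∀ i : ℤ, (N : ℤ) ≤ i → zp G (n:ℤ) ((N + 1 - i).toNat) i = 1 := by
        intro i hi
        rw [zp_stab G n i 0 (fun k hk => hN _ (Or.inr (by
            have h2 : (k : ℤ) ≤ n * k := le_mul_of_one_le_left (by positivity) hn'
            omega))) ((N + 1 - i).toNat) (by omega)]
        rfl
      -- the conjugator
      set X : ℤ → F := fun i => if 0 ≤ i then zp G (n:ℤ) ((N + 1 - i).toNat) i
          else (pp G (n:ℤ) ((i + N + 1).toNat) i)⁻¹ with hX
      have hXpos : ∀ i : ℤ, 0 ≤ i → X i = zp G (n:ℤ) ((N + 1 - i).toNat) i := by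
        intro i h
        simp only [hX]
        rw [if_pos h]
      have hXneg : ∀ i : ℤ, i < 0 → X i = (pp G (n:ℤ) ((i + N + 1).toNat) i)⁻¹ := by
        intro i h
        simp only [hX]
        rw [if_neg (not_le.mpr h)]
      have hXfin : (Function.mulSupport X).Finite := by
        apply (Set.finite_Icc (-(N:ℤ) - 1) (N:ℤ)).subset
        intro i hi
        simp only [Set.mem_Icc]
        by_contra hc
        push_neg at hc
        apply hi
        rcases le_or_gt 0 i with h | h
        · have hNi : (N:ℤ) < i := hc (by omega)
          rw [hXpos i h, hZhigh i (by omega)]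
        · have hlow : i < -(N:ℤ) := by
            rcases le_or_gt (-(N:ℤ) - 1) i with h2 | h2
            · exact absurd (hc h2) (by omega)
            · omega
          rw [hXneg i h, hYlow i hlow, inv_one]
      -- the tuple
      set v : Fin n → F := fun r => zp G (n:ℤ) ((N + 1 - (r : ℤ)).toNat) (r : ℤ)
          * pp G (n:ℤ) (((r : ℤ) + N + 1).toNat) (r : ℤ) with hv
      -- the twisted conjugation identity
      have hid : ∀ i : ℤ, emb n v i = X i * G i * (X (i - n))⁻¹ := by
        intro i
        rcases lt_or_ge i 0 with h | h
        · rw [emb_ne n v i (by omega), hXneg i h, hXneg (i - n) (by omega), inv_inv,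
            mul_assoc, ← hYrec i]
          group
        · rcases lt_or_ge i (n : ℤ) with h' | h'
          · have hemb : emb n v i = zp G (n:ℤ) ((N + 1 - i).toNat) i
                * pp G (n:ℤ) ((i + N + 1).toNat) i := by
              rw [emb, dif_pos ⟨h, h'⟩]
              simp only [hv, Int.toNat_of_nonneg h]
            rw [hemb, hXpos i h, hXneg (i - n) (by omega), inv_inv, mul_assoc, ← hYrec i]
          · rw [emb_ne n v i (by omega), hXpos i h, hXpos (i - n) (by omega), hZrec i]
            group
      -- conclude surjectivity
      refine ⟨v, Subtype.ext ?_⟩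
      simp only []
      rw [← hg]
      apply (class_eq g (embD n v) _).symm
      refine ⟨⟨X, hXfin⟩, ?_⟩
      apply Subtype.ext
      funext i
      rw [show ((embD n v : ℤ → F) i) = emb n v i from rfl, hid i]
      exact (coord_rel n ⟨X, hXfin⟩ g _ rfl i).symm
  rw [Nat.card_eq_of_bijective _ key |>.symm, Nat.card_fun]
  congr 1
  simp [Nat.card_eq_fintype_card]
end
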